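/- Backtrack stack invariant: define a running state running(θ, stk, k) to be coherent with respect to the original goal (p₀, t₀) if success of any stack frame's saved continuation from its saved substitution implies a declarative match of p₀ against t₀. Then coherence is preserved by every step of the machine: if running(θ,stk,k) is coherent and steps to running(θ',stk',k'), the latter is coherent; and if a coherent state steps to success(θ), then θ ⊢ p₀ ≈ t₀. -/

import Mathlib

namespace PyPM
/-- Terms over a signature of function symbols (names with lists of arguments). -/
inductive Tm where
  | app : String → List Tm → Tm


/-- Basic patterns: variables, function applications, and alternates. -/
inductive Pat where
  | var : String → Pat
  | app : String → List Pat → Pat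
  | alt : Pat → Pat → Pat

/-- Substitutions: finite maps from variables to terms (modeled as partial functions). -/
abbrev Subst := String → Option Tm

def emptySubst : Subst := fun _ => none

def Subst.update (θ : Subst) (x : String) (t : Tm) : Subst :=
  fun y => if y = x then some t else θ y

/-- θ ⊆ θ' : every binding of θ is a binding of θ'. -/
def Subst.le (θ θ' : Subst) : Prop := ∀ x t, θ x = some t → θ' x = some t

/-- Declarative matching semantics: θ ⊢ p ≈ t. -/
inductive Matches : Subst → Pat → Tm → Prop where
  | var {θ : Subst} {x : String} {t : Tm} :
      θ x = some t → Matches θ (.var x) t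
  | app {θ : Subst} {f : String} {ps : List Pat} {ts : List Tm}
      (hlen : ps.length = ts.length)
      (hargs : ∀ i (h1 : i < ps.length) (h2 : i < ts.length), Matches θ ps[i] ts[i]) :
      Matches θ (.app f ps) (.app f ts)
  | alt1 {θ : Subst} {p p' : Pat} {t : Tm} :
      Matches θ p t → Matches θ (.alt p p') t
  | alt2 {θ : Subst} {p p' : Pat} {t : Tm} :
      Matches θ p' t → Matches θ (.alt p p') t

/-- Actions in the machine continuation. -/
inductive Action where
  | doMatch : Pat → Tm → Action

abbrev Cont := List Action
abbrev Frame := Subst × Cont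
abbrev Stack := List Frame

/-- Machine states. -/
inductive St where
  | success : Subst → St
  | failure : St
  | running : Subst → Stack → Cont → St

/-- Backtracking: pop the stack, or fail if it is empty. -/
def backtrack : Stack → St
  | [] => .failure
  | (θ, k) :: stk => .running θ stk k

/-- The step relation of the algorithmic matching machine. -/
inductive Step : St → St → Prop where
  | success {θ stk} :
      Step (.running θ stk []) (.success θ)
  | varBind {θ : Subst} {stk x t k} :
      θ x = none →
      Step (.running θ stk (.doMatch (.var x) t :: k)) (.running (θ.update x t) stk k)
  | varBound {θ : Subst} {stk x t k} :
      θ x = some t →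
      Step (.running θ stk (.doMatch (.var x) t :: k)) (.running θ stk k)
  | varConflict {θ : Subst} {stk x t t' k} :
      θ x = some t' → t' ≠ t →
      Step (.running θ stk (.doMatch (.var x) t :: k)) (backtrack stk)
  | fn {θ stk f ps ts k} :
      ps.length = ts.length →
      Step (.running θ stk (.doMatch (.app f ps) (.app f ts) :: k))
           (.running θ stk (((ps.zip ts).map fun pt => .doMatch pt.1 pt.2) ++ k))
  | fnConflict {θ stk f g ps ts k} :
      f ≠ g ∨ ps.length ≠ ts.length →
      Step (.running θ stk (.doMatch (.app f ps) (.app g ts) :: k)) (backtrack stk)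
  | alt {θ stk p p' t k} :
      Step (.running θ stk (.doMatch (.alt p p') t :: k))
           (.running θ ((θ, .doMatch p' t :: k) :: stk) (.doMatch p t :: k))

end PyPM
namespace PyPM

/-- Alternate-free patterns: built only from variables and function applications. -/
inductive AltFree : Pat → Prop where
  | var {x : String} : AltFree (.var x)
  | app {f : String} {ps : List Pat} : (∀ p ∈ ps, AltFree p) → AltFree (.app f ps)

/-- `VarIn x p`: the variable x occurs in the pattern p. -/
inductive VarIn (x : String) : Pat → Prop where
  | var : VarIn x (.var x)
  | app {f : String} {ps : List Pat} {p : Pat} : p ∈ ps → VarIn x p → VarIn x (.app f ps)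
  | alt1 {p p' : Pat} : VarIn x p → VarIn x (.alt p p')
  | alt2 {p p' : Pat} : VarIn x p' → VarIn x (.alt p p')

/-- Number of occurrences of the variable x in a pattern. -/
def varCount (x : String) : Pat → Nat
  | .var y => if y = x then 1 else 0
  | .app _ ps => (ps.attach.map (fun q => varCount x q.1)).sum
  | .alt p q => varCount x p + varCount x q
  decreasing_by
  all_goals first
    | (have := List.sizeOf_lt_of_mem q.2; simp only [Pat.app.sizeOf_spec]; omega)
    | (simp only [Pat.alt.sizeOf_spec]; omega)

/-- A pattern is linear if each variable occurs at most once. -/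
def Linear (p : Pat) : Prop := ∀ x, varCount x p ≤ 1

/-- Reading a term as a (ground, alternate-free) pattern. -/
def Tm.toPat : Tm → Pat
  | .app f ts => .app f (ts.attach.map (fun q => Tm.toPat q.1))
  decreasing_by
  have := List.sizeOf_lt_of_mem q.2; simp only [Tm.app.sizeOf_spec]; omega

/-- Ground, alternate-free patterns: only the function-application constructor. -/
inductive GroundAltFree : Pat → Prop where
  | app {f : String} {ps : List Pat} : (∀ p ∈ ps, GroundAltFree p) → GroundAltFree (.app f ps)

end PyPM

open PyPM

/-- θ satisfies a continuation k if every match action in k holds declaratively. -/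
def SatCont (θ : Subst) (k : Cont) : Prop :=
  ∀ (p : Pat) (t : Tm), Action.doMatch p t ∈ k → Matches θ p t

/-- Coherence of a running state with respect to the original goal (p₀, t₀). -/
def Coherent (p₀ : Pat) (t₀ : Tm) (θ : Subst) (stk : Stack) (k : Cont) : Prop :=
  (∀ θ' : Subst, Subst.le θ θ' → SatCont θ' k → Matches θ' p₀ t₀) ∧
  (∀ fr ∈ stk, ∀ θ' : Subst, Subst.le fr.1 θ' → SatCont θ' fr.2 → Matches θ' p₀ t₀)

theorem backtrack_coherent (p₀ : Pat) (t₀ : Tm) {stk : Stack} {θ' : Subst} {stk' : Stack} {k' : Cont}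
    (h : ∀ fr ∈ stk, ∀ θ'' : Subst, Subst.le fr.1 θ'' → SatCont θ'' fr.2 → Matches θ'' p₀ t₀)
    (he : backtrack stk = .running θ' stk' k') :
    Coherent p₀ t₀ θ' stk' k' := by
  cases stk with
  | nil => simp [backtrack] at he
  | cons fr rest =>
    obtain ⟨fr1, fr2⟩ := fr
    simp [backtrack] at he
    obtain ⟨h1, h2, h3⟩ := he
    subst h1; subst h2; subst h3
    exact ⟨fun θ'' hle hs => h _ (List.mem_cons_self) θ'' hle hs,
      fun g hg θ'' hle hs => h g (List.mem_cons_of_mem _ hg) θ'' hle hs⟩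

theorem coherence_invariant (p₀ : Pat) (t₀ : Tm) :
    (∀ (θ θ' : Subst) (stk stk' : Stack) (k k' : Cont),
      Coherent p₀ t₀ θ stk k →
      Step (.running θ stk k) (.running θ' stk' k') →
      Coherent p₀ t₀ θ' stk' k') ∧
    (∀ (θ : Subst) (stk : Stack) (k : Cont) (θs : Subst),
      Coherent p₀ t₀ θ stk k →
      Step (.running θ stk k) (.success θs) →
      Matches θs p₀ t₀) := by
  constructor
  · intro θ θ' stk stk' k k' hc hs
    obtain ⟨h1, h2⟩ := hc
    generalize hA : St.running θ stk k = A at hs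
    generalize hB : St.running θ' stk' k' = B at hs
    cases hs with
    | success => exact absurd hB (by simp)
    | @varBind θ₁ stk₁ x t k₁ hx =>
      cases hA; cases hB
      refine ⟨fun θ'' hle hsat => h1 θ'' ?_ ?_, h2⟩
      · intro y s hy
        apply hle
        unfold Subst.update
        by_cases h : y = x
        · subst h; rw [hy] at hx; exact absurd hx (by simp)
        · simp [h, hy]
      · intro p t' hmem
        rcases List.mem_cons.mp hmem with h | h
        · cases h
          exact Matches.var (hle x t (by simp [Subst.update]))
        · exact hsat p t' h
    | @varBound θ₁ stk₁ x t k₁ hx =>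
      cases hA; cases hB
      refine ⟨fun θ'' hle hsat => h1 θ'' hle ?_, h2⟩
      intro p t' hmem
      rcases List.mem_cons.mp hmem with h | h
      · cases h; exact Matches.var (hle x t hx)
      · exact hsat p t' h
    | varConflict hx hne =>
      cases hA
      exact backtrack_coherent p₀ t₀ h2 hB.symm
    | @fn θ₁ stk₁ f ps ts k₁ hlen =>
      cases hA; cases hB
      refine ⟨fun θ'' hle hsat => h1 θ'' hle ?_, h2⟩
      intro p t' hmem
      rcases List.mem_cons.mp hmem with h | h
      · cases h
        refine Matches.app hlen (fun i hi1 hi2 => ?_)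
        apply hsat
        apply List.mem_append_left
        have : (ps[i], ts[i]) ∈ ps.zip ts := by
          rw [List.mem_iff_getElem]
          exact ⟨i, by simp [List.length_zip]; omega, by simp⟩
        exact List.mem_map.mpr ⟨(ps[i], ts[i]), this, rfl⟩
      · exact hsat p t' (List.mem_append_right _ h)
    | fnConflict hne =>
      cases hA
      exact backtrack_coherent p₀ t₀ h2 hB.symm
    | @alt θ₁ stk₁ p p' t k₁ =>
      cases hA; cases hB
      refine ⟨fun θ'' hle hsat => h1 θ'' hle ?_, ?_⟩
      · intro q s hmem
        rcases List.mem_cons.mp hmem with h | h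
        · cases h
          exact Matches.alt1 (hsat _ _ (List.mem_cons_self))
        · exact hsat q s (List.mem_cons_of_mem _ h)
      · intro fr hfr θ'' hle hsat
        rcases List.mem_cons.mp hfr with h | h
        · subst h
          apply h1 θ'' hle
          intro q s hmem
          rcases List.mem_cons.mp hmem with h | h
          · cases h
            exact Matches.alt2 (hsat _ _ (List.mem_cons_self))
          · exact hsat q s (List.mem_cons_of_mem _ h)
        · exact h2 fr h θ'' hle hsat
  · intro θ stk k θs hc hs
    obtain ⟨h1, _⟩ := hc
    generalize hA : St.running θ stk k = A at hs
    generalize hB : St.success θs = B at hs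
    cases hs with
    | success =>
      cases hA; cases hB
      exact h1 _ (fun x t ht => ht) (fun p t h => absurd h List.not_mem_nil)
    | varConflict hx hne =>
      cases hA
      cases stk with
      | nil => simp [backtrack] at hB
      | cons fr rest => obtain ⟨a,b⟩ := fr; simp [backtrack] at hB
    | fnConflict hne =>
      cases hA
      cases stk with
      | nil => simp [backtrack] at hB
      | cons fr rest => obtain ⟨a,b⟩ := fr; simp [backtrack] at hB
    | varBind hx => exact absurd hB (by simp)
    | varBound hx => exact absurd hB (by simp)
    | fn hlen => exact absurd hB (by simp)
    | alt => exact absurd hB (by simp)
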